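/- Let T_n be the Chung–Feller sojourn time of the Bernoulli(p) random walk. For odd integers n, k with 0 ≤ k ≤ n−1, P(T_n = k) + P(T_n = k+1) = P(T_{n+1} = k+1). -/

import Mathlib

open MeasureTheory ProbabilityTheory Finset

private lemma sojourn_aux (X : ℕ → ℤ) (hX : ∀ i, X i = 1 ∨ X i = -1)
    (S : ℕ → ℤ) (hS : ∀ m, S m = ∑ i ∈ Finset.range m, X i)
    (T : ℕ → ℕ)
    (hT : ∀ m, T m = ∑ j ∈ Finset.Icc 1 m,
        (if 0 < S j ∨ (S j = 0 ∧ 0 < S (j - 1)) then 1 else 0))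
    (n k : ℕ) (hn : Odd n) (hk : Odd k) :
    T (n + 1) = k + 1 ↔ (T n = k ∨ T n = k + 1) := by
  classical
  set d : ℕ → ℕ := fun j => if 0 < S j ∨ (S j = 0 ∧ 0 < S (j - 1)) then 1 else 0 with hd
  have hd01 : ∀ j, d j = 0 ∨ d j = 1 := by
    intro j; simp only [hd]; split <;> simp
  have hTsucc : ∀ m, T (m + 1) = T m + d (m + 1) := by
    intro m
    rw [hT (m + 1), hT m, Finset.sum_Icc_succ_top (Nat.succ_le_succ (Nat.zero_le m))]
  have hstep : ∀ j, S (j + 1) = S j + X j := by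
    intro j; rw [hS, hS, Finset.sum_range_succ]
  have hpar : ∀ j, Even (S j + (j : ℤ)) := by
    intro j
    induction j with
    | zero => simp [hS]
    | succ j ih =>
      rcases ih with ⟨r, hr⟩
      rcases hX j with h | h
      · exact ⟨r + 1, by push_cast; rw [hstep j, h]; push_cast at hr; linarith⟩
      · exact ⟨r, by push_cast; rw [hstep j, h]; push_cast at hr; linarith⟩
  have hne : ∀ j, Odd j → S j ≠ 0 := by
    intro j hj h
    rcases hpar j with ⟨r, hr⟩
    rcases hj with ⟨m, hm⟩
    rw [h] at hr
    subst hm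
    push_cast at hr
    omega
  have hBB : ∀ j, Odd j → d (j + 1) = d j := by
    intro j hj
    have hSne := hne j hj
    have hs := hstep j
    have c2 : (0 < S j ∨ (S j = 0 ∧ 0 < S (j - 1))) ↔ 0 < S j :=
      ⟨fun h' => h'.elim id fun h'' => absurd h''.1 hSne, Or.inl⟩
    have c1 : (0 < S (j + 1) ∨ (S (j + 1) = 0 ∧ 0 < S j)) ↔ 0 < S j := by
      rcases hX j with h | h <;> rw [h] at hs <;> omega
    simp only [hd, Nat.add_sub_cancel, c1, c2]
  have hTe : ∀ m, Even (T (2 * m)) := by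
    intro m
    induction m with
    | zero =>
      have he : Finset.Icc 1 0 = (∅ : Finset ℕ) := Finset.Icc_eq_empty (by omega)
      rw [show 2 * 0 = 0 from rfl, hT, he, Finset.sum_empty]
      exact Even.zero
    | succ m ih =>
      have e1 := hTsucc (2 * m)
      have e2 := hTsucc (2 * m + 1)
      have e3 := hBB (2 * m + 1) ⟨m, by ring⟩
      rcases ih with ⟨r, hr⟩
      refine ⟨r + d (2 * m + 1), ?_⟩
      rw [show 2 * (m + 1) = 2 * m + 1 + 1 from by ring, e2, e3, e1]
      omega
  obtain ⟨M, hM⟩ := hn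
  obtain ⟨K, hK⟩ := hk
  have ha := hTe M
  have e1 := hTsucc (2 * M)
  have e2 := hTsucc (2 * M + 1)
  have e3 := hBB (2 * M + 1) ⟨M, by ring⟩
  have hd1 := hd01 (2 * M + 1)
  rcases ha with ⟨r, hr⟩
  subst hM hK
  omega

theorem sojourn_odd_rec {Ω : Type*} [MeasurableSpace Ω] (μ : Measure Ω)
    [IsProbabilityMeasure μ]
    (p : ℝ) (hp0 : 0 < p) (hp1 : p < 1)
    (X : ℕ → Ω → ℤ) (hmeas : ∀ i, Measurable (X i))
    (hindep : iIndepFun X μ)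
    (hX1 : ∀ i, μ {ω | X i ω = 1} = ENNReal.ofReal p)
    (hX2 : ∀ i, μ {ω | X i ω = -1} = ENNReal.ofReal (1 - p))
    (S : ℕ → Ω → ℤ) (hS : ∀ n ω, S n ω = ∑ i ∈ Finset.range n, X i ω)
    (T : ℕ → Ω → ℕ)
    (hT : ∀ n ω, T n ω = ∑ j ∈ Finset.Icc 1 n,
        (if 0 < S j ω ∨ (S j ω = 0 ∧ 0 < S (j - 1) ω) then 1 else 0))
    (n k : ℕ) (hn : Odd n) (hk : Odd k) (hkn : k ≤ n - 1)
    :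
    (μ {ω | T n ω = k}).toReal + (μ {ω | T n ω = k + 1}).toReal
      = (μ {ω | T (n + 1) ω = k + 1}).toReal := by
  classical
  have hSmeas : ∀ j, Measurable (S j) := by
    intro j
    have hj : S j = fun ω => ∑ i ∈ Finset.range j, X i ω := funext (hS j)
    rw [hj]
    exact Finset.measurable_sum _ fun i _ => hmeas i
  have hTmeas : ∀ m, Measurable (T m) := by
    intro m
    have hm : T m = fun ω => ∑ j ∈ Finset.Icc 1 m,
        (if 0 < S j ω ∨ (S j ω = 0 ∧ 0 < S (j - 1) ω) then 1 else 0) := funext (hT m)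
    rw [hm]
    apply Finset.measurable_sum
    intro j _
    refine Measurable.ite ?_ measurable_const measurable_const
    have h1 : MeasurableSet {ω | 0 < S j ω} :=
      measurableSet_lt measurable_const (hSmeas j)
    have h2 : MeasurableSet {ω | S j ω = 0} := (hSmeas j) (measurableSet_singleton 0)
    have h3 : MeasurableSet {ω | 0 < S (j - 1) ω} :=
      measurableSet_lt measurable_const (hSmeas (j - 1))
    exact h1.union (h2.inter h3)
  have hone : ∀ i, μ ({ω | X i ω = 1} ∪ {ω | X i ω = -1}) = 1 := by
    intro i
    have hdisj : Disjoint {ω | X i ω = 1} {ω | X i ω = -1} := by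
      rw [Set.disjoint_left]
      intro ω h1 h2
      simp only [Set.mem_setOf_eq] at h1 h2
      omega
    have hm2 : MeasurableSet {ω | X i ω = -1} := (hmeas i) (measurableSet_singleton (-1))
    rw [measure_union hdisj hm2, hX1, hX2, ← ENNReal.ofReal_add hp0.le (by linarith),
      show p + (1 - p) = 1 from by ring, ENNReal.ofReal_one]
  have hgood : ∀ᵐ ω ∂μ, ∀ i, X i ω = 1 ∨ X i ω = -1 := by
    rw [MeasureTheory.ae_all_iff]
    intro i
    rw [MeasureTheory.ae_iff]
    have hset : {ω | ¬(X i ω = 1 ∨ X i ω = -1)} = ({ω | X i ω = 1} ∪ {ω | X i ω = -1})ᶜ := by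
      ext ω
      simp [Set.mem_union, not_or]
    have hsm : MeasurableSet ({ω | X i ω = 1} ∪ {ω | X i ω = -1}) :=
      ((hmeas i) (measurableSet_singleton 1)).union ((hmeas i) (measurableSet_singleton (-1)))
    rw [hset, prob_compl_eq_zero_iff hsm]
    exact hone i
  have key : {ω | T (n + 1) ω = k + 1} =ᵐ[μ] (({ω | T n ω = k} ∪ {ω | T n ω = k + 1} : Set Ω)) := by
    rw [Filter.eventuallyEq_set]
    filter_upwards [hgood] with ω hω
    have h := sojourn_aux (fun i => X i ω) hω (fun m => S m ω) (fun m => hS m ω)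
      (fun m => T m ω) (fun m => hT m ω) n k hn hk
    simpa [Set.mem_union] using h
  have hmB : MeasurableSet {ω | T n ω = k + 1} := (hTmeas n) (measurableSet_singleton (k + 1))
  have hdisj : Disjoint {ω | T n ω = k} {ω | T n ω = k + 1} := by
    rw [Set.disjoint_left]
    intro ω h1 h2
    simp only [Set.mem_setOf_eq] at h1 h2
    omega
  have hmain : μ {ω | T (n + 1) ω = k + 1} = μ {ω | T n ω = k} + μ {ω | T n ω = k + 1} := by
    rw [measure_congr key, measure_union hdisj hmB]
  rw [hmain, ENNReal.toReal_add (measure_ne_top μ _) (measure_ne_top μ _)]
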